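/- Let d ≥ 2, let ρ be a Hermitian d×d complex matrix, and let M̂ be an imaginary observable (Hermitian with M̂ᵀ = −M̂) satisfying tr(M̂²) = d. Then the second moment of partial real randomized measurements satisfies ∫_{O(d)} (tr(O·ρ·Oᵀ·M̂))² dμ_O(O) = (2/(d−1)) · tr( ((ρ − ρᵀ)/2)² ). -/

import Mathlib

open MeasureTheory Matrix

/-- Entrywise coercion of a real orthogonal matrix to a complex matrix. -/
def OC {d : ℕ} (O : Matrix.orthogonalGroup (Fin d) ℝ) : Matrix (Fin d) (Fin d) ℂ :=
  (O : Matrix (Fin d) (Fin d) ℝ).map Complex.ofReal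

namespace Stmt5Aux

variable {d : ℕ}

lemma OC_mul (O Q : Matrix.orthogonalGroup (Fin d) ℝ) : OC (O * Q) = OC O * OC Q := by
  unfold OC
  push_cast
  exact Matrix.map_mul (f := Complex.ofRealHom)

lemma coe_transpose_mul_self (O : Matrix.orthogonalGroup (Fin d) ℝ) :
    (O : Matrix (Fin d) (Fin d) ℝ)ᵀ * O = 1 := by
  have h := O.2.1
  rwa [Matrix.star_eq_conjTranspose, Matrix.conjTranspose_eq_transpose_of_trivial] at h

lemma coe_self_mul_transpose (O : Matrix.orthogonalGroup (Fin d) ℝ) :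
    (O : Matrix (Fin d) (Fin d) ℝ) * (O : Matrix (Fin d) (Fin d) ℝ)ᵀ = 1 := by
  have h := O.2.2
  rwa [Matrix.star_eq_conjTranspose, Matrix.conjTranspose_eq_transpose_of_trivial] at h

lemma OC_transpose_mul_self (O : Matrix.orthogonalGroup (Fin d) ℝ) : (OC O)ᵀ * OC O = 1 := by
  have h := congrArg (fun M => M.map (Complex.ofRealHom : ℝ →+* ℂ)) (coe_transpose_mul_self O)
  rw [Matrix.map_mul, Matrix.transpose_map] at h
  simpa [Matrix.map_mul, Matrix.map_one, Matrix.transpose_map, OC,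
    show ⇑Complex.ofRealHom = Complex.ofReal from rfl] using h

lemma OC_self_mul_transpose (O : Matrix.orthogonalGroup (Fin d) ℝ) : OC O * (OC O)ᵀ = 1 := by
  have h := congrArg (fun M => M.map (Complex.ofRealHom : ℝ →+* ℂ)) (coe_self_mul_transpose O)
  rw [Matrix.map_mul, Matrix.transpose_map] at h
  simpa [Matrix.map_mul, Matrix.map_one, Matrix.transpose_map, OC,
    show ⇑Complex.ofRealHom = Complex.ofReal from rfl] using h

lemma continuous_OC : Continuous (OC (d := d)) :=
  continuous_subtype_val.matrix_map Complex.continuous_ofReal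

/-! ### Topological instances -/

lemma entry_bound (M : Matrix (Fin d) (Fin d) ℝ) (hM : M ∈ Matrix.orthogonalGroup (Fin d) ℝ)
    (i j : Fin d) : M i j ∈ Set.Icc (-1:ℝ) 1 := by
  have h1 := congrFun (congrFun hM.1 j) j
  rw [Matrix.mul_apply] at h1
  have hsum : ∑ k, M k j ^ 2 = 1 := by
    rw [show (1 : Matrix (Fin d) (Fin d) ℝ) j j = 1 by simp [Matrix.one_apply]] at h1
    rw [← h1]
    refine Finset.sum_congr rfl fun k _ => ?_
    simp [Matrix.star_apply, pow_two]
  have hle : M i j ^ 2 ≤ 1 := by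
    rw [← hsum]
    exact Finset.single_le_sum (fun k _ => sq_nonneg (M k j)) (Finset.mem_univ i)
  exact abs_le_of_sq_le_sq' (by simpa using hle) (by norm_num)

instance instCompactOG : CompactSpace (Matrix.orthogonalGroup (Fin d) ℝ) := by
  suffices h : IsCompact (Matrix.orthogonalGroup (Fin d) ℝ : Set (Matrix (Fin d) (Fin d) ℝ)) from
    isCompact_iff_compactSpace.mp h
  have hK : IsCompact ((Set.univ.pi (fun _ : Fin d => Set.univ.pi fun _ : Fin d =>
      Set.Icc (-1:ℝ) 1)) : Set (Matrix (Fin d) (Fin d) ℝ)) :=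
    isCompact_univ_pi fun _ => isCompact_univ_pi fun _ => isCompact_Icc
  apply hK.of_isClosed_subset
  · have he : (Matrix.orthogonalGroup (Fin d) ℝ : Set (Matrix (Fin d) (Fin d) ℝ)) =
        (fun M : Matrix (Fin d) (Fin d) ℝ => star M * M) ⁻¹' {1} ∩
        (fun M : Matrix (Fin d) (Fin d) ℝ => M * star M) ⁻¹' {1} := by
      ext M
      simp [Unitary.mem_iff, Set.mem_preimage, and_comm]
    rw [he]
    exact (isClosed_singleton.preimage (continuous_star.matrix_mul continuous_id)).inter
      (isClosed_singleton.preimage (continuous_id.matrix_mul continuous_star))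
  · intro M hM
    rw [Set.mem_univ_pi]; intro i
    rw [Set.mem_univ_pi]; intro j
    exact entry_bound M hM i j

instance instContMulOG : ContinuousMul (Matrix.orthogonalGroup (Fin d) ℝ) := by
  refine ⟨?_⟩
  apply continuous_induced_rng.2
  exact (continuous_subtype_val.comp continuous_fst).matrix_mul
    (continuous_subtype_val.comp continuous_snd)

instance instContInvOG : ContinuousInv (Matrix.orthogonalGroup (Fin d) ℝ) := by
  refine ⟨?_⟩
  apply continuous_induced_rng.2
  exact continuous_star.comp continuous_subtype_val

instance instTopGroupOG : IsTopologicalGroup (Matrix.orthogonalGroup (Fin d) ℝ) := {}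

/-! ### Sign and permutation orthogonal matrices -/

def sgnMat (x : Fin d) : Matrix (Fin d) (Fin d) ℝ :=
  Matrix.diagonal (fun i => if i = x then -1 else 1)

lemma sgnMat_mem (x : Fin d) : sgnMat x ∈ Matrix.orthogonalGroup (Fin d) ℝ := by
  have h : star (sgnMat x) * sgnMat x = 1 := by
    unfold sgnMat
    rw [Matrix.star_eq_conjTranspose, Matrix.conjTranspose_eq_transpose_of_trivial,
      Matrix.diagonal_transpose, Matrix.diagonal_mul_diagonal]
    rw [show (fun i => (if i = x then (-1:ℝ) else 1) * (if i = x then -1 else 1)) = fun _ => 1 by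
      funext i; by_cases h : i = x <;> simp [h]]
    exact Matrix.diagonal_one
  refine ⟨h, ?_⟩
  rw [mul_eq_one_comm] at h
  exact h

def sgnG (x : Fin d) : Matrix.orthogonalGroup (Fin d) ℝ := ⟨sgnMat x, sgnMat_mem x⟩

lemma permMat_mem (σ : Equiv.Perm (Fin d)) :
    σ.permMatrix ℝ ∈ Matrix.orthogonalGroup (Fin d) ℝ := by
  have h : star (σ.permMatrix ℝ) * σ.permMatrix ℝ = 1 := by
    rw [Matrix.star_eq_conjTranspose, Matrix.conjTranspose_eq_transpose_of_trivial]
    rw [show (σ.permMatrix ℝ)ᵀ = (σ⁻¹).permMatrix ℝ by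
      rw [← PEquiv.toMatrix_symm, ← Equiv.toPEquiv_symm]; rfl]
    rw [PEquiv.toMatrix_toPEquiv_mul]
    ext i j
    simp [Equiv.Perm.permMatrix, PEquiv.toMatrix_apply, Equiv.toPEquiv_apply, Matrix.one_apply,
      Matrix.submatrix_apply, Equiv.eq_symm_apply]
  refine ⟨h, ?_⟩
  rw [mul_eq_one_comm] at h
  exact h

def permG (σ : Equiv.Perm (Fin d)) : Matrix.orthogonalGroup (Fin d) ℝ :=
  ⟨σ.permMatrix ℝ, permMat_mem σ⟩

lemma OC_sgnG (x : Fin d) :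
    OC (sgnG x) = Matrix.diagonal (fun i => if i = x then (-1:ℂ) else 1) := by
  unfold OC sgnG sgnMat
  ext i j
  by_cases h : i = j <;>
    simp [Matrix.map_apply, Matrix.diagonal_apply, h, apply_ite Complex.ofReal]

lemma OC_permG (σ : Equiv.Perm (Fin d)) : OC (permG σ) = σ.permMatrix ℂ := by
  unfold OC permG
  ext i j
  simp [Matrix.map_apply, Equiv.Perm.permMatrix, PEquiv.toMatrix_apply,
    apply_ite Complex.ofReal]

/-! ### The conjugated matrix BB -/

noncomputable def BB (M : Matrix (Fin d) (Fin d) ℂ) (O : Matrix.orthogonalGroup (Fin d) ℝ) :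
    Matrix (Fin d) (Fin d) ℂ := (OC O)ᵀ * M * OC O

lemma BB_mul (M : Matrix (Fin d) (Fin d) ℂ) (O Q : Matrix.orthogonalGroup (Fin d) ℝ) :
    BB M (O * Q) = (OC Q)ᵀ * BB M O * OC Q := by
  unfold BB
  rw [OC_mul, Matrix.transpose_mul]
  noncomm_ring

lemma BB_transpose (M : Matrix (Fin d) (Fin d) ℂ) (hM : Mᵀ = -M)
    (O : Matrix.orthogonalGroup (Fin d) ℝ) : (BB M O)ᵀ = - BB M O := by
  unfold BB
  rw [Matrix.transpose_mul, Matrix.transpose_mul, Matrix.transpose_transpose, hM]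
  noncomm_ring

lemma BB_diag (M : Matrix (Fin d) (Fin d) ℂ) (hM : Mᵀ = -M)
    (O : Matrix.orthogonalGroup (Fin d) ℝ) (b : Fin d) : BB M O b b = 0 := by
  have h := congrFun (congrFun (BB_transpose M hM O) b) b
  simp only [Matrix.transpose_apply, Matrix.neg_apply] at h
  have h2 : (2:ℂ) * BB M O b b = 0 := by linear_combination h
  simpa using h2

lemma BB_sq_trace (M : Matrix (Fin d) (Fin d) ℂ)
    (O : Matrix.orthogonalGroup (Fin d) ℝ) :
    (BB M O * (BB M O)ᵀ).trace = (M * Mᵀ).trace := by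
  unfold BB
  rw [Matrix.transpose_mul, Matrix.transpose_mul, Matrix.transpose_transpose]
  have hcol : ((OC O)ᵀ * M * OC O) * ((OC O)ᵀ * (Mᵀ * OC O)) = (OC O)ᵀ * ((M * Mᵀ) * OC O) := by
    calc ((OC O)ᵀ * M * OC O) * ((OC O)ᵀ * (Mᵀ * OC O))
        = (OC O)ᵀ * (M * ((OC O * (OC O)ᵀ) * (Mᵀ * OC O))) := by noncomm_ring
      _ = (OC O)ᵀ * ((M * Mᵀ) * OC O) := by rw [OC_self_mul_transpose]; noncomm_ring
  rw [hcol, Matrix.trace_mul_comm, mul_assoc, OC_self_mul_transpose, mul_one]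

lemma continuous_BB (M : Matrix (Fin d) (Fin d) ℂ) (i j : Fin d) :
    Continuous fun O : Matrix.orthogonalGroup (Fin d) ℝ => BB M O i j := by
  exact ((((continuous_OC.matrix_transpose).matrix_mul continuous_const).matrix_mul
    continuous_OC).matrix_elem i j)

/-! ### Haar measure invariance -/

section Measure

variable [MeasurableSpace (Matrix.orthogonalGroup (Fin d) ℝ)]
    [BorelSpace (Matrix.orthogonalGroup (Fin d) ℝ)]
    (μ : Measure (Matrix.orthogonalGroup (Fin d) ℝ))
    [μ.IsHaarMeasure] [IsProbabilityMeasure μ]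

omit [IsProbabilityMeasure μ] in
lemma conj_measurePreserving (Q : Matrix.orthogonalGroup (Fin d) ℝ) :
    MeasurePreserving (fun O => Q⁻¹ * O * Q⁻¹⁻¹) μ μ := by
  have hcont : Continuous fun O : Matrix.orthogonalGroup (Fin d) ℝ => Q⁻¹ * O * Q⁻¹⁻¹ :=
    (continuous_const.mul continuous_id).mul continuous_const
  exact MonoidHom.measurePreserving (f := (MulAut.conj Q⁻¹).toMonoidHom) hcont
    (MulAut.conj Q⁻¹).surjective rfl

omit [IsProbabilityMeasure μ] in
lemma map_right_eq (Q : Matrix.orthogonalGroup (Fin d) ℝ) :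
    μ.map (fun O => O * Q) = μ := by
  have hc : (fun O : Matrix.orthogonalGroup (Fin d) ℝ => O * Q)
      = (fun O => Q * O) ∘ (fun O => Q⁻¹ * O * Q⁻¹⁻¹) := by
    funext O; simp [mul_assoc]
  have h1 : Measurable fun O : Matrix.orthogonalGroup (Fin d) ℝ => Q * O :=
    (continuous_const.mul continuous_id).measurable
  have h2 : Measurable fun O : Matrix.orthogonalGroup (Fin d) ℝ => Q⁻¹ * O * Q⁻¹⁻¹ :=
    ((continuous_const.mul continuous_id).mul continuous_const).measurable
  rw [hc, ← Measure.map_map h1 h2]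
  rw [(conj_measurePreserving μ Q).map_eq]
  exact MeasureTheory.map_mul_left_eq_self μ Q

omit [IsProbabilityMeasure μ] in
lemma integral_right_translate (Q : Matrix.orthogonalGroup (Fin d) ℝ)
    (f : Matrix.orthogonalGroup (Fin d) ℝ → ℂ) :
    ∫ O, f (O * Q) ∂μ = ∫ O, f O ∂μ := by
  calc ∫ O, f (O * Q) ∂μ
      = ∫ O, f ((Homeomorph.toMeasurableEquiv (Homeomorph.mulRight Q)) O) ∂μ := rfl
    _ = ∫ y, f y ∂(μ.map (Homeomorph.toMeasurableEquiv (Homeomorph.mulRight Q))) :=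
        (integral_map_equiv _ f).symm
    _ = ∫ O, f O ∂μ := by
        rw [show ⇑(Homeomorph.toMeasurableEquiv (Homeomorph.mulRight Q))
          = (fun O => O * Q) from rfl, map_right_eq μ Q]

omit [IsProbabilityMeasure μ] in
lemma cont_integrable {f : Matrix.orthogonalGroup (Fin d) ℝ → ℂ} (hf : Continuous f) :
    Integrable f μ :=
  hf.integrable_of_hasCompactSupport
    (IsCompact.of_isClosed_subset isCompact_univ (isClosed_tsupport f) (Set.subset_univ _))

end Measure

/-! ### Second moments of BB -/

section Moments

variable [MeasurableSpace (Matrix.orthogonalGroup (Fin d) ℝ)]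
    [BorelSpace (Matrix.orthogonalGroup (Fin d) ℝ)]
    (μ : Measure (Matrix.orthogonalGroup (Fin d) ℝ))
    [μ.IsHaarMeasure] [IsProbabilityMeasure μ]
    (M : Matrix (Fin d) (Fin d) ℂ)

noncomputable def mm (b a c e : Fin d) : ℂ := ∫ O, BB M O b a * BB M O c e ∂μ

lemma mm_def (b a c e : Fin d) : mm μ M b a c e = ∫ O, BB M O b a * BB M O c e ∂μ := rfl

lemma BB_mul_sgnG (O : Matrix.orthogonalGroup (Fin d) ℝ) (x i j : Fin d) :
    BB M (O * sgnG x) i j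
      = (if i = x then (-1:ℂ) else 1) * ((if j = x then (-1:ℂ) else 1) * BB M O i j) := by
  rw [BB_mul, OC_sgnG, Matrix.diagonal_transpose]
  rw [Matrix.mul_diagonal, Matrix.diagonal_mul]
  ring

lemma mm_sgn (x b a c e : Fin d)
    (hodd : ((if b = x then 1 else 0) + (if a = x then 1 else 0)
      + (if c = x then 1 else 0) + (if e = x then 1 else 0) : ℤ) % 2 = 1) :
    mm μ M b a c e = 0 := by
  have hinv := integral_right_translate μ (sgnG x)
    (fun O => BB M O b a * BB M O c e)
  have hpt : ∀ O : Matrix.orthogonalGroup (Fin d) ℝ,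
      BB M (O * sgnG x) b a * BB M (O * sgnG x) c e
        = (((if b = x then (-1:ℂ) else 1) * (if a = x then (-1:ℂ) else 1))
          * ((if c = x then (-1:ℂ) else 1) * (if e = x then (-1:ℂ) else 1)))
          * (BB M O b a * BB M O c e) := by
    intro O
    rw [BB_mul_sgnG, BB_mul_sgnG]
    ring
  have hsgn : (((if b = x then (-1:ℂ) else 1) * (if a = x then (-1:ℂ) else 1))
      * ((if c = x then (-1:ℂ) else 1) * (if e = x then (-1:ℂ) else 1))) = -1 := by
    by_cases hb : b = x <;> by_cases ha : a = x <;> by_cases hc : c = x <;>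
      by_cases he : e = x <;> norm_num [hb, ha, hc, he] at hodd <;> norm_num [hb, ha, hc, he]
  rw [show (fun O : Matrix.orthogonalGroup (Fin d) ℝ =>
      BB M (O * sgnG x) b a * BB M (O * sgnG x) c e)
    = fun O => (-1:ℂ) * (BB M O b a * BB M O c e) by
      funext O; rw [hpt O, hsgn]] at hinv
  rw [integral_const_mul] at hinv
  have h2 : (2:ℂ) * mm μ M b a c e = 0 := by
    unfold mm
    linear_combination - hinv
  simpa using h2

lemma BB_mul_permG (O : Matrix.orthogonalGroup (Fin d) ℝ) (τ : Equiv.Perm (Fin d)) :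
    BB M (O * permG τ) = (BB M O).submatrix ⇑τ⁻¹ ⇑τ⁻¹ := by
  rw [BB_mul, OC_permG]
  rw [show (τ.permMatrix ℂ)ᵀ = (τ⁻¹).permMatrix ℂ by
    rw [← PEquiv.toMatrix_symm, ← Equiv.toPEquiv_symm]; rfl]
  rw [PEquiv.toMatrix_toPEquiv_mul, PEquiv.mul_toMatrix_toPEquiv]
  rfl

lemma mm_perm (σ : Equiv.Perm (Fin d)) (b a c e : Fin d) :
    mm μ M (σ b) (σ a) (σ c) (σ e) = mm μ M b a c e := by
  have hinv := integral_right_translate μ (permG σ⁻¹)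
    (fun O => BB M O b a * BB M O c e)
  rw [show (fun O : Matrix.orthogonalGroup (Fin d) ℝ =>
      BB M (O * permG σ⁻¹) b a * BB M (O * permG σ⁻¹) c e)
    = fun O => BB M O (σ b) (σ a) * BB M O (σ c) (σ e) by
      funext O; rw [BB_mul_permG]; simp [Matrix.submatrix_apply, inv_inv]] at hinv
  exact hinv

end Moments

end Stmt5Aux

open Stmt5Aux

set_option maxHeartbeats 1000000 in
/-- the second moment of partial real randomized measurements on a single qudit. -/
theorem stmt_5 (d : ℕ) (hd : 2 ≤ d)
    [MeasurableSpace (Matrix.orthogonalGroup (Fin d) ℝ)]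
    [BorelSpace (Matrix.orthogonalGroup (Fin d) ℝ)]
    (μ : Measure (Matrix.orthogonalGroup (Fin d) ℝ))
    [μ.IsHaarMeasure] [IsProbabilityMeasure μ]
    (ρ Mhat : Matrix (Fin d) (Fin d) ℂ)
    (hρ : ρ.IsHermitian)
    (hMhat : Mhat.IsHermitian) (hMimag : Mhatᵀ = -Mhat)
    (hM2 : (Mhat * Mhat).trace = (d : ℂ)) :
    ∫ O, (OC O * ρ * (OC O)ᵀ * Mhat).trace ^ 2 ∂μ =
      (2 / ((d : ℂ) - 1)) *
        (((2 : ℂ)⁻¹ • (ρ - ρᵀ)) * ((2 : ℂ)⁻¹ • (ρ - ρᵀ))).trace := by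
  classical
  set A : Matrix (Fin d) (Fin d) ℂ := (2:ℂ)⁻¹ • (ρ - ρᵀ) with hA
  have hAT : Aᵀ = -A := by
    rw [hA]
    ext i j
    simp [Matrix.transpose_apply, Matrix.sub_apply, Matrix.smul_apply]
    ring
  have hAdiag : ∀ a, A a a = 0 := fun a => by
    rw [hA]; simp [Matrix.smul_apply, Matrix.sub_apply]
  have hAanti : ∀ a b : Fin d, A b a = - A a b := fun a b => by
    have h := congrFun (congrFun hAT a) b
    simpa [Matrix.transpose_apply, Matrix.neg_apply] using h
  -- Step 1: rewrite the integrand via the antisymmetric part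
  have hpt : ∀ O, (OC O * ρ * (OC O)ᵀ * Mhat).trace = (A * BB Mhat O).trace := by
    intro O
    have h1 : (OC O * ρ * (OC O)ᵀ * Mhat).trace = (ρ * BB Mhat O).trace := by
      rw [show OC O * ρ * (OC O)ᵀ * Mhat = OC O * (ρ * ((OC O)ᵀ * Mhat)) by noncomm_ring]
      rw [Matrix.trace_mul_comm]
      congr 1
      unfold BB
      noncomm_ring
    have h2 : (ρᵀ * BB Mhat O).trace = -(ρ * BB Mhat O).trace := by
      conv_lhs => rw [← Matrix.trace_transpose]
      rw [Matrix.transpose_mul, Matrix.transpose_transpose, BB_transpose Mhat hMimag O]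
      rw [Matrix.neg_mul, Matrix.trace_neg, Matrix.trace_mul_comm]
    rw [h1, hA, Matrix.smul_mul, Matrix.sub_mul, Matrix.trace_smul, Matrix.trace_sub, h2,
      smul_eq_mul]
    ring
  have hint : ∀ b a c e : Fin d,
      Integrable (fun O => BB Mhat O b a * BB Mhat O c e) μ :=
    fun b a c e => cont_integrable μ ((continuous_BB Mhat b a).mul (continuous_BB Mhat c e))
  -- Step 2: expand the square of the trace into second moments
  have htr : ∀ O, (A * BB Mhat O).trace
      = ∑ p : Fin d × Fin d, A p.1 p.2 * BB Mhat O p.2 p.1 := by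
    intro O
    rw [← Finset.univ_product_univ, Finset.sum_product]
    simp [Matrix.trace, Matrix.diag, Matrix.mul_apply]
  have hexp : ∀ O, ((A * BB Mhat O).trace) ^ 2
      = ∑ p : Fin d × Fin d, ∑ q : Fin d × Fin d,
          (A p.1 p.2 * A q.1 q.2) * (BB Mhat O p.2 p.1 * BB Mhat O q.2 q.1) := by
    intro O
    rw [htr O, sq, Finset.sum_mul_sum]
    exact Finset.sum_congr rfl fun p _ => Finset.sum_congr rfl fun q _ => by ring
  have hI : ∫ O, (OC O * ρ * (OC O)ᵀ * Mhat).trace ^ 2 ∂μ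
      = ∑ p : Fin d × Fin d, ∑ q : Fin d × Fin d,
          (A p.1 p.2 * A q.1 q.2) * mm μ Mhat p.2 p.1 q.2 q.1 := by
    rw [show (fun O => (OC O * ρ * (OC O)ᵀ * Mhat).trace ^ 2)
        = fun O => ∑ p : Fin d × Fin d, ∑ q : Fin d × Fin d,
            (A p.1 p.2 * A q.1 q.2) * (BB Mhat O p.2 p.1 * BB Mhat O q.2 q.1) by
      funext O; rw [hpt O, hexp O]]
    rw [integral_finset_sum _ (fun p _ =>
      integrable_finset_sum _ (fun q _ => (hint _ _ _ _).const_mul _))]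
    refine Finset.sum_congr rfl fun p _ => ?_
    rw [integral_finset_sum _ (fun q _ => (hint _ _ _ _).const_mul _)]
    refine Finset.sum_congr rfl fun q _ => ?_
    exact integral_const_mul _ _
  -- the universal second moment λ
  have h0 : (0:ℕ) < d := by omega
  have h1 : (1:ℕ) < d := by omega
  set i0 : Fin d := ⟨0, h0⟩ with hi0def
  set i1 : Fin d := ⟨1, h1⟩ with hi1def
  have hi01 : i0 ≠ i1 := by simp [hi0def, hi1def, Fin.ext_iff]
  set lam : ℂ := mm μ Mhat i0 i1 i0 i1 with hlamdef
  have hlam_eq : ∀ b a : Fin d, b ≠ a → mm μ Mhat b a b a = lam := by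
    intro b a hba
    set τ1 := Equiv.swap i0 b with hτ1
    have hτ1i0 : τ1 i0 = b := Equiv.swap_apply_left i0 b
    have hb1 : b ≠ τ1 i1 := by
      intro h
      exact hi01 (τ1.injective (by rw [hτ1i0, h]))
    set τ2 := Equiv.swap (τ1 i1) a with hτ2
    have key := mm_perm μ Mhat (τ1.trans τ2) i0 i1 i0 i1
    have e0 : (τ1.trans τ2) i0 = b := by
      rw [Equiv.trans_apply, hτ1i0, hτ2]
      exact Equiv.swap_apply_of_ne_of_ne hb1 hba
    have e1 : (τ1.trans τ2) i1 = a := by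
      rw [Equiv.trans_apply, hτ2]
      exact Equiv.swap_apply_left _ _
    rw [e0, e1] at key
    exact key
  have hswap : ∀ b a : Fin d, mm μ Mhat b a a b = - mm μ Mhat b a b a := by
    intro b a
    rw [mm_def, mm_def]
    rw [show (fun O : Matrix.orthogonalGroup (Fin d) ℝ => BB Mhat O b a * BB Mhat O a b)
        = fun O => (-1:ℂ) * (BB Mhat O b a * BB Mhat O b a) by
      funext O
      have h := congrFun (congrFun (BB_transpose Mhat hMimag O) b) a
      simp only [Matrix.transpose_apply, Matrix.neg_apply] at h
      rw [h]; ring]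
    rw [integral_const_mul]
    ring
  have hdiagmm : ∀ b c e : Fin d, mm μ Mhat b b c e = 0 := by
    intro b c e
    rw [mm_def]
    rw [show (fun O : Matrix.orthogonalGroup (Fin d) ℝ => BB Mhat O b b * BB Mhat O c e)
        = fun _ => (0:ℂ) by
      funext O; rw [BB_diag Mhat hMimag O b]; ring]
    simp
  -- total mass of the diagonal moments
  have hsum : ∑ p : Fin d × Fin d, mm μ Mhat p.1 p.2 p.1 p.2 = -(d:ℂ) := by
    simp only [mm_def]
    rw [← integral_finset_sum _ (fun p _ => hint _ _ _ _)]
    rw [show (fun O : Matrix.orthogonalGroup (Fin d) ℝ =>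
        ∑ p : Fin d × Fin d, BB Mhat O p.1 p.2 * BB Mhat O p.1 p.2)
        = fun _ => -(d:ℂ) by
      funext O
      have ht := BB_sq_trace Mhat O
      have hts : (BB Mhat O * (BB Mhat O)ᵀ).trace
          = ∑ p : Fin d × Fin d, BB Mhat O p.1 p.2 * BB Mhat O p.1 p.2 := by
        rw [← Finset.univ_product_univ, Finset.sum_product]
        simp [Matrix.trace, Matrix.diag, Matrix.mul_apply, Matrix.transpose_apply]
      rw [← hts, ht, hMimag, Matrix.mul_neg, Matrix.trace_neg, hM2]]
    simp
  -- counting the off-diagonal pairs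
  have hcount : ∑ p : Fin d × Fin d, mm μ Mhat p.1 p.2 p.1 p.2 = ((d:ℂ)^2 - d) * lam := by
    have hterm : ∀ p : Fin d × Fin d,
        mm μ Mhat p.1 p.2 p.1 p.2 = if p.1 = p.2 then 0 else lam := by
      intro p
      by_cases h : p.1 = p.2
      · rw [if_pos h, h, hdiagmm]
      · rw [if_neg h]; exact hlam_eq p.1 p.2 h
    rw [Finset.sum_congr rfl fun p _ => hterm p]
    rw [Finset.sum_ite, Finset.sum_const_zero, Finset.sum_const, zero_add]
    have hcard : (Finset.univ.filter fun p : Fin d × Fin d => ¬ p.1 = p.2).card = d * d - d := by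
      have : (Finset.univ.filter fun p : Fin d × Fin d => ¬ p.1 = p.2)
          = (Finset.univ : Finset (Fin d)).offDiag := by
        ext p
        simp [Finset.mem_offDiag]
      rw [this, Finset.offDiag_card]
      simp
    rw [hcard, nsmul_eq_mul]
    have hle : d ≤ d * d := Nat.le_mul_of_pos_left d h0
    push_cast [Nat.cast_sub hle]
    ring
  have hdC : (d:ℂ) ≠ 0 := Nat.cast_ne_zero.2 (by omega)
  have hd1C : (d:ℂ) - 1 ≠ 0 := by
    intro h
    have h2 : (d:ℂ) = ((1:ℕ):ℂ) := by push_cast; linear_combination h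
    have := Nat.cast_injective (R := ℂ) h2
    omega
  have hlam_val : ((d:ℂ) - 1) * lam = -1 := by
    have h2 : ((d:ℂ)^2 - d) * lam = -(d:ℂ) := by rw [← hcount]; exact hsum
    apply mul_left_cancel₀ hdC
    linear_combination h2
  -- evaluate the double sum
  rw [hI]
  have hqsum : ∀ p : Fin d × Fin d,
      ∑ q : Fin d × Fin d, (A p.1 p.2 * A q.1 q.2) * mm μ Mhat p.2 p.1 q.2 q.1
        = if p.1 = p.2 then 0 else 2 * lam * A p.1 p.2 ^ 2 := by
    rintro ⟨a, b⟩
    by_cases hab : a = b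
    · rw [if_pos hab]
      apply Finset.sum_eq_zero
      intro q _
      have : A a b = 0 := by rw [hab]; exact hAdiag b
      rw [show ((a,b) : Fin d × Fin d).1 = a from rfl, show ((a,b) : Fin d × Fin d).2 = b from rfl,
        this]
      ring
    · rw [if_neg hab]
      have hsub : ∑ q : Fin d × Fin d, (A a b * A q.1 q.2) * mm μ Mhat b a q.2 q.1
          = ∑ q ∈ ({(a,b),(b,a)} : Finset (Fin d × Fin d)),
              (A a b * A q.1 q.2) * mm μ Mhat b a q.2 q.1 := by
        symm
        apply Finset.sum_subset (Finset.subset_univ _)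
        rintro ⟨c, e⟩ _ hq
        simp only [Finset.mem_insert, Finset.mem_singleton] at hq
        push_neg at hq
        obtain ⟨hq1, hq2⟩ := hq
        by_cases hce : c = e
        · have : A c e = 0 := by rw [hce]; exact hAdiag e
          rw [show ((c,e) : Fin d × Fin d).1 = c from rfl,
            show ((c,e) : Fin d × Fin d).2 = e from rfl, this]
          ring
        · -- vanishing by the sign symmetry; the index tuple is (b, a, e, c)
          by_cases hca : c = a
          · have heb : ¬ b = e := by
              intro h; exact hq1 (by rw [hca, ← h])
            have hea : ¬ a = e := by
              intro h; exact hce (by rw [hca, h])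
            have hcee : ¬ c = e := hce
            rw [show ((c,e) : Fin d × Fin d).1 = c from rfl,
              show ((c,e) : Fin d × Fin d).2 = e from rfl]
            rw [mm_sgn μ Mhat e b a e c (by norm_num [heb, hea, hcee])]
            ring
          · by_cases hae : a = e
            · have hcb : ¬ b = c := by
                intro h; exact hq2 (by rw [← h, ← hae])
              have hac : ¬ a = c := fun h => hca h.symm
              have hec : ¬ e = c := fun h => hce h.symm
              rw [show ((c,e) : Fin d × Fin d).1 = c from rfl,
                show ((c,e) : Fin d × Fin d).2 = e from rfl]
              rw [mm_sgn μ Mhat c b a e c (by norm_num [hcb, hac, hec])]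
              ring
            · have hba : ¬ b = a := fun h => hab h.symm
              have hea : ¬ e = a := fun h => hae h.symm
              have hca' : ¬ c = a := hca
              rw [show ((c,e) : Fin d × Fin d).1 = c from rfl,
                show ((c,e) : Fin d × Fin d).2 = e from rfl]
              rw [mm_sgn μ Mhat a b a e c (by norm_num [hba, hea, hca'])]
              ring
      rw [show ((a,b) : Fin d × Fin d).1 = a from rfl, show ((a,b) : Fin d × Fin d).2 = b from rfl]
      rw [hsub, Finset.sum_pair (by simp [Prod.ext_iff]; intro h; exact absurd h hab)]
      have t1 : mm μ Mhat b a b a = lam := hlam_eq b a fun h => hab h.symm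
      have t2 : mm μ Mhat b a a b = - lam := by rw [hswap b a, t1]
      simp only []
      rw [t1, t2, hAanti a b]
      ring
  rw [Finset.sum_congr rfl fun p _ => hqsum p]
  have hdrop : ∀ p : Fin d × Fin d,
      (if p.1 = p.2 then 0 else 2 * lam * A p.1 p.2 ^ 2) = 2 * lam * A p.1 p.2 ^ 2 := by
    intro p
    by_cases h : p.1 = p.2
    · rw [if_pos h, h, hAdiag]; ring
    · rw [if_neg h]
  rw [Finset.sum_congr rfl fun p _ => hdrop p]
  have hRT : (A * A).trace = - ∑ p : Fin d × Fin d, A p.1 p.2 ^ 2 := by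
    rw [← Finset.univ_product_univ, Finset.sum_product]
    rw [show ∀ X : Matrix (Fin d) (Fin d) ℂ, X.trace = ∑ i, X i i from fun X => rfl]
    rw [← Finset.sum_neg_distrib]
    refine Finset.sum_congr rfl fun a _ => ?_
    rw [Matrix.mul_apply, ← Finset.sum_neg_distrib]
    refine Finset.sum_congr rfl fun b _ => ?_
    rw [hAanti a b]
    ring
  rw [← Finset.mul_sum, hRT]
  have h2lam : 2 * lam = - (2 / ((d:ℂ)-1)) := by
    field_simp
    linear_combination hlam_val
  rw [h2lam]
  ring
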